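/- Let P and Q be complementary orthogonal projectors on ℝᴺ (P + Q = I, PQ = 0, both symmetric), and let Z be an invertible matrix. Define α = ‖PZ‖₂ > 0 and β = ‖QZ‖₂ > 0, and M := P/α + Q/β. Then M is symmetric positive definite, ‖MZ‖₂ ≤ 2, and M is invertible with M⁻¹ = αP + βQ. -/

import Mathlib

open Matrix
open scoped Matrix.Norms.L2Operator

/-- The norm-balancing preconditioner `M = P/α + Q/β` with `α = ‖PZ‖₂`, `β = ‖QZ‖₂`,
for complementary orthogonal projectors `P, Q` and invertible `Z`: `M` is SPD,
`‖MZ‖₂ ≤ 2`, and `M⁻¹ = αP + βQ`. -/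
theorem stmt13 {N : ℕ} (P Q Z : Matrix (Fin N) (Fin N) ℝ)
    (hPQ : P + Q = 1) (hPQ0 : P * Q = 0)
    (hPsym : Pᵀ = P) (hQsym : Qᵀ = Q) (hPproj : P * P = P) (hQproj : Q * Q = Q)
    (hZ : IsUnit Z)
    (hα : 0 < ‖P * Z‖) (hβ : 0 < ‖Q * Z‖) :
    let α := ‖P * Z‖
    let β := ‖Q * Z‖
    let M := α⁻¹ • P + β⁻¹ • Q
    M.PosDef ∧ ‖M * Z‖ ≤ 2 ∧ M * (α • P + β • Q) = 1 ∧ (α • P + β • Q) * M = 1 := by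
  intro α β M
  have hα' : (α : ℝ) ≠ 0 := hα.ne'
  have hβ' : (β : ℝ) ≠ 0 := hβ.ne'
  have hQP : Q * P = 0 := by
    have h := congrArg Matrix.transpose hPQ0
    simpa [Matrix.transpose_mul, hPsym, hQsym] using h
  -- inverse identities
  have hinv1 : M * (α • P + β • Q) = 1 := by
    show (α⁻¹ • P + β⁻¹ • Q) * (α • P + β • Q) = 1
    rw [Matrix.add_mul, Matrix.mul_add, Matrix.mul_add]
    simp only [Matrix.smul_mul, Matrix.mul_smul, smul_smul, hPproj, hQproj, hPQ0, hQP,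
      smul_zero, add_zero, zero_add, inv_mul_cancel₀ hα', inv_mul_cancel₀ hβ',
      mul_inv_cancel₀ hα', mul_inv_cancel₀ hβ', one_smul]
    exact hPQ
  have hinv2 : (α • P + β • Q) * M = 1 := by
    show (α • P + β • Q) * (α⁻¹ • P + β⁻¹ • Q) = 1
    rw [Matrix.add_mul, Matrix.mul_add, Matrix.mul_add]
    simp only [Matrix.smul_mul, Matrix.mul_smul, smul_smul, hPproj, hQproj, hPQ0, hQP,
      smul_zero, add_zero, zero_add, inv_mul_cancel₀ hα', inv_mul_cancel₀ hβ',
      mul_inv_cancel₀ hα', mul_inv_cancel₀ hβ', one_smul]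
    exact hPQ
  -- positive semidefiniteness of P and Q
  have hPeq : P = Pᴴ * P := by
    rw [conjTranspose_eq_transpose_of_trivial, hPsym, hPproj]
  have hQeq : Q = Qᴴ * Q := by
    rw [conjTranspose_eq_transpose_of_trivial, hQsym, hQproj]
  have hPsd : P.PosSemidef := hPeq ▸ Matrix.posSemidef_conjTranspose_mul_self P
  have hQsd : Q.PosSemidef := hQeq ▸ Matrix.posSemidef_conjTranspose_mul_self Q
  have hPnn : ∀ x : Fin N → ℝ, 0 ≤ x ⬝ᵥ P *ᵥ x := by
    intro x; simpa using hPsd.dotProduct_mulVec_nonneg x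
  have hQnn : ∀ x : Fin N → ℝ, 0 ≤ x ⬝ᵥ Q *ᵥ x := by
    intro x; simpa using hQsd.dotProduct_mulVec_nonneg x
  -- PosDef
  have hherm : M.IsHermitian := by
    show Mᴴ = M
    show (α⁻¹ • P + β⁻¹ • Q)ᴴ = α⁻¹ • P + β⁻¹ • Q
    rw [conjTranspose_add, conjTranspose_smul, conjTranspose_smul,
      conjTranspose_eq_transpose_of_trivial, conjTranspose_eq_transpose_of_trivial,
      hPsym, hQsym]
    simp
  have hposdef : M.PosDef := by
    refine Matrix.PosDef.of_dotProduct_mulVec_pos hherm (fun x hx => ?_)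
    have hexp : star x ⬝ᵥ M *ᵥ x = α⁻¹ * (x ⬝ᵥ P *ᵥ x) + β⁻¹ * (x ⬝ᵥ Q *ᵥ x) := by
      show x ⬝ᵥ (α⁻¹ • P + β⁻¹ • Q) *ᵥ x = _
      rw [Matrix.add_mulVec, dotProduct_add, Matrix.smul_mulVec,
        Matrix.smul_mulVec, dotProduct_smul, dotProduct_smul]
      rfl
    rw [hexp]
    rcases (hPnn x).lt_or_eq with hlt | heq
    · have h1 : 0 < α⁻¹ * (x ⬝ᵥ P *ᵥ x) := mul_pos (inv_pos.mpr hα) hlt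
      have h2 : 0 ≤ β⁻¹ * (x ⬝ᵥ Q *ᵥ x) := mul_nonneg (inv_pos.mpr hβ).le (hQnn x)
      linarith
    · -- x ⬝ᵥ P *ᵥ x = 0, so P x = 0, so Q x = x
      have hPx : P *ᵥ x = 0 := by
        have := (hPsd.dotProduct_mulVec_zero_iff x).mp (by simpa using heq.symm)
        simpa using this
      have hQx : Q *ᵥ x = x := by
        have h := congrArg (fun A => A *ᵥ x) hPQ
        simpa [Matrix.add_mulVec, hPx] using h
      have hpos : 0 < x ⬝ᵥ Q *ᵥ x := by
        rw [hQx]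
        have hne : x ⬝ᵥ x ≠ 0 := fun h => hx (dotProduct_self_eq_zero.mp h)
        have hnn : (0:ℝ) ≤ x ⬝ᵥ x := by simpa [hQx] using hQnn x
        exact lt_of_le_of_ne hnn (Ne.symm hne)
      have h1 : 0 < β⁻¹ * (x ⬝ᵥ Q *ᵥ x) := mul_pos (inv_pos.mpr hβ) hpos
      rw [← heq]
      simpa using h1
  refine ⟨hposdef, ?_, hinv1, hinv2⟩
  -- norm bound
  have hMZ : M * Z = α⁻¹ • (P * Z) + β⁻¹ • (Q * Z) := by
    show (α⁻¹ • P + β⁻¹ • Q) * Z = _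
    rw [Matrix.add_mul, Matrix.smul_mul, Matrix.smul_mul]
  calc ‖M * Z‖ ≤ ‖α⁻¹ • (P * Z)‖ + ‖β⁻¹ • (Q * Z)‖ := hMZ ▸ norm_add_le _ _
    _ = 2 := by
        rw [norm_smul, norm_smul, Real.norm_eq_abs, Real.norm_eq_abs,
          abs_of_pos (inv_pos.mpr hα), abs_of_pos (inv_pos.mpr hβ),
          inv_mul_cancel₀ hα', inv_mul_cancel₀ hβ']
        norm_num
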